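/- Lower bound on entanglement robustness for symmetric GPTs: with symmetric GPTs as above and z ∈ X1 ⊗ X2 with injective norm ‖z‖_{X1 ⊗_ε X2} ≤ 1, the state ω(z) := γ1 ⊗ γ2 + z belongs to C1 ⊛ C2, and its entanglement robustness satisfies E_rob(ω(z)) ≥ (‖z‖_{X1 ⊗_π X2} − 1)/2. -/

import Mathlib

open scoped TensorProduct
open TensorProduct

section Defs

variable {V V' V1 V2 : Type*}
  [AddCommGroup V] [Module ℝ V] [AddCommGroup V'] [Module ℝ V']
  [AddCommGroup V1] [Module ℝ V1] [AddCommGroup V2] [Module ℝ V2]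

/-- The dual cone of a set `C`: linear functionals nonnegative on `C`. -/
def dualCone (C : Set V) : Set (Module.Dual ℝ V) := {f | ∀ x ∈ C, 0 ≤ f x}

/-- The functional `f ⊗ g` on `V1 ⊗ V2`. -/
noncomputable def pairTensor (f : Module.Dual ℝ V1) (g : Module.Dual ℝ V2) :
    Module.Dual ℝ (V1 ⊗[ℝ] V2) :=
  (TensorProduct.lid ℝ ℝ).toLinearMap ∘ₗ TensorProduct.map f g

/-- The minimal tensor product of two cones: the convex hull of the product tensors. -/
def minTensor (C1 : Set V1) (C2 : Set V2) : Set (V1 ⊗[ℝ] V2) :=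
  convexHull ℝ {z | ∃ x ∈ C1, ∃ y ∈ C2, z = x ⊗ₜ[ℝ] y}

/-- The maximal tensor product of two cones: tensors nonnegative on product functionals. -/
def maxTensor (C1 : Set V1) (C2 : Set V2) : Set (V1 ⊗[ℝ] V2) :=
  {z | ∀ f ∈ dualCone C1, ∀ g ∈ dualCone C2, 0 ≤ pairTensor f g z}

/-- A cone: a set closed under multiplication by nonnegative scalars. -/
def IsConeSet (C : Set V) : Prop := ∀ x ∈ C, ∀ a : ℝ, 0 ≤ a → a • x ∈ C

/-- Topological closedness of a subset of a finite-dimensional real vector space,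
expressed through (all) linear identifications with `Fin n → ℝ`. -/
def IsClosedSet (C : Set V) : Prop := ∀ (n : ℕ) (e : V ≃ₗ[ℝ] (Fin n → ℝ)), IsClosed (e '' C)

/-- A proper cone: convex, closed, salient and generating. -/
def IsProperCone (C : Set V) : Prop :=
  Convex ℝ C ∧ IsClosedSet C ∧ IsConeSet C ∧ C ∩ (-C) = {0} ∧ Submodule.span ℝ C = ⊤

/-- A classical cone: the set of vectors with nonnegative coordinates in some basis,
i.e. the cone generated by a basis of the space. -/
def IsClassicalCone (C : Set V) : Prop :=
  ∃ (ι : Type) (b : Module.Basis ι ℝ V), C = {x | ∀ i, 0 ≤ b.repr x i}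

/-- `C'` is a retract of `C` if there are positive maps `Φ, Ψ` with `Φ ∘ Ψ = id`. -/
def IsRetractOf (C' : Set V') (C : Set V) : Prop :=
  ∃ (Φ : V →ₗ[ℝ] V') (Ψ : V' →ₗ[ℝ] V),
    (∀ x ∈ C, Φ x ∈ C') ∧ (∀ y ∈ C', Ψ y ∈ C) ∧ Φ ∘ₗ Ψ = LinearMap.id

/-- A polyhedral cone: the conical hull of finitely many vectors. -/
def IsPolyhedralCone (C : Set V) : Prop :=
  ∃ (k : ℕ) (v : Fin k → V),
    C = {x | ∃ c : Fin k → ℝ, (∀ i, 0 ≤ c i) ∧ x = ∑ i, c i • v i}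

end Defs

/-- The gauge function of a cone `C` with respect to a base point `γ`:
`N(x) = inf { t > 0 : γ + t⁻¹ x ∈ C }`. -/
noncomputable def gaugeN {V : Type*} [AddCommGroup V] [Module ℝ V]
    (C : Set V) (γ : V) (x : V) : ℝ :=
  sInf {t : ℝ | 0 < t ∧ γ + t⁻¹ • x ∈ C}

/-- The projective tensor norm of `z` relative to subsets `X1, X2` and gauge
functions `N1, N2`: the infimum of `Σᵢ N1(xᵢ)·N2(yᵢ)` over decompositions
`z = Σᵢ xᵢ ⊗ yᵢ` with `xᵢ ∈ X1`, `yᵢ ∈ X2`. -/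
noncomputable def projNormOn {V1 V2 : Type*} [AddCommGroup V1] [Module ℝ V1]
    [AddCommGroup V2] [Module ℝ V2]
    (X1 : Set V1) (X2 : Set V2) (N1 : V1 → ℝ) (N2 : V2 → ℝ) (z : V1 ⊗[ℝ] V2) : ℝ :=
  sInf {s : ℝ | ∃ (k : ℕ) (x : Fin k → V1) (y : Fin k → V2),
    (∀ i, x i ∈ X1) ∧ (∀ i, y i ∈ X2) ∧ z = ∑ i, x i ⊗ₜ[ℝ] y i ∧
    s = ∑ i, N1 (x i) * N2 (y i)}

/-- The injective tensor norm of `z` relative to subsets `X1, X2` and gauge functions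
`N1, N2`: the supremum of `(f ⊗ g)(z)` over functionals `f, g` lying in the dual unit
balls of the corresponding gauges. -/
noncomputable def injNormOn {V1 V2 : Type*} [AddCommGroup V1] [Module ℝ V1]
    [AddCommGroup V2] [Module ℝ V2]
    (X1 : Set V1) (X2 : Set V2) (N1 : V1 → ℝ) (N2 : V2 → ℝ) (z : V1 ⊗[ℝ] V2) : ℝ :=
  sSup {r : ℝ | ∃ (f : Module.Dual ℝ V1) (g : Module.Dual ℝ V2),
    (∀ x ∈ X1, f x ≤ N1 x) ∧ (∀ y ∈ X2, g y ≤ N2 y) ∧ r = pairTensor f g z}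

/-- The entanglement robustness of `ω`: the least value of `(u1⊗u2)(ζ)` over `ζ` in the
minimal tensor product such that `ω + ζ` is also in the minimal tensor product. -/
noncomputable def entRob {V1 V2 : Type*} [AddCommGroup V1] [Module ℝ V1]
    [AddCommGroup V2] [Module ℝ V2]
    (C1 : Set V1) (C2 : Set V2) (u1 : Module.Dual ℝ V1) (u2 : Module.Dual ℝ V2)
    (ω : V1 ⊗[ℝ] V2) : ℝ :=
  sInf {r : ℝ | ∃ ζ ∈ minTensor C1 C2,
    ω + ζ ∈ minTensor C1 C2 ∧ r = pairTensor u1 u2 ζ}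

section Aux

variable {V V1 V2 : Type*} [AddCommGroup V] [Module ℝ V]
  [AddCommGroup V1] [Module ℝ V1] [AddCommGroup V2] [Module ℝ V2]

lemma pairTensor_tmul (f : Module.Dual ℝ V1) (g : Module.Dual ℝ V2) (x : V1) (y : V2) :
    pairTensor f g (x ⊗ₜ[ℝ] y) = f x * g y := by
  simp [pairTensor]

lemma zero_mem_of_cone {C : Set V} (hC : IsConeSet C) {x : V} (hx : x ∈ C) : (0 : V) ∈ C := by
  simpa using hC x hx 0 le_rfl

lemma add_mem_of_cone {C : Set V} (hconv : Convex ℝ C) (hC : IsConeSet C)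
    {x y : V} (hx : x ∈ C) (hy : y ∈ C) : x + y ∈ C := by
  have h := hconv hx hy (by norm_num : (0:ℝ) ≤ 1/2) (by norm_num : (0:ℝ) ≤ 1/2) (by norm_num)
  have h2 := hC _ h 2 (by norm_num)
  rw [smul_add, smul_smul, smul_smul] at h2
  norm_num at h2
  exact h2

lemma minTensor_tmul_mem {C1 : Set V1} {C2 : Set V2} {a : V1} {b : V2}
    (ha : a ∈ C1) (hb : b ∈ C2) : a ⊗ₜ[ℝ] b ∈ minTensor C1 C2 :=
  subset_convexHull ℝ _ ⟨a, ha, b, hb, rfl⟩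

lemma minTensor_smul_mem {C1 : Set V1} {C2 : Set V2} (h1 : IsConeSet C1)
    {c : ℝ} (hc : 0 ≤ c) {w : V1 ⊗[ℝ] V2} (hw : w ∈ minTensor C1 C2) :
    c • w ∈ minTensor C1 C2 := by
  have : c • w ∈ (LinearMap.lsmul ℝ (V1 ⊗[ℝ] V2) c) ''
      (convexHull ℝ {z | ∃ x ∈ C1, ∃ y ∈ C2, z = x ⊗ₜ[ℝ] y}) := ⟨w, hw, rfl⟩
  rw [LinearMap.image_convexHull] at this
  refine convexHull_mono ?_ this
  rintro _ ⟨_, ⟨x, hx, y, hy, rfl⟩, rfl⟩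
  exact ⟨c • x, h1 x hx c hc, y, hy, (TensorProduct.smul_tmul' c x y).symm⟩

lemma minTensor_add_mem {C1 : Set V1} {C2 : Set V2} (h1 : IsConeSet C1)
    {w w' : V1 ⊗[ℝ] V2} (hw : w ∈ minTensor C1 C2) (hw' : w' ∈ minTensor C1 C2) :
    w + w' ∈ minTensor C1 C2 :=
  add_mem_of_cone (convex_convexHull ℝ _)
    (fun x hx a ha => minTensor_smul_mem h1 ha hx) hw hw'

lemma minTensor_zero_mem {C1 : Set V1} {C2 : Set V2} (h1 : IsConeSet C1)
    {a : V1} (ha : a ∈ C1) {b : V2} (hb : b ∈ C2) : (0 : V1 ⊗[ℝ] V2) ∈ minTensor C1 C2 := by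
  have := minTensor_tmul_mem (zero_mem_of_cone h1 ha) hb
  simpa using this

/-- Key interior lemma: for a symmetric proper cone, `γ + t • x ∈ C` for some small `t > 0`. -/
lemma exists_pos_smul_mem {V : Type*} [AddCommGroup V] [Module ℝ V] [FiniteDimensional ℝ V]
    (C : Set V) (hC : IsProperCone C) (u : Module.Dual ℝ V) (γ : V)
    (hu : ∀ x ∈ C, x ≠ 0 → 0 < u x) (hγ : γ ∈ C) (hγu : u γ = 1)
    (hsym : ∀ ω ∈ C, u ω = 1 → (2 : ℝ) • γ - ω ∈ C)
    (x : V) (hx : u x = 0) : ∃ t : ℝ, 0 < t ∧ γ + t • x ∈ C := by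
  obtain ⟨hconv, hclosed, hcone, hsal, hspan⟩ := hC
  -- transfer to Fin n → ℝ
  set n := Module.finrank ℝ V with hn
  obtain e := (Module.finBasis ℝ V).equivFun
  set D : Set (Fin n → ℝ) := e '' C with hD
  have hDconv : Convex ℝ D := hconv.linear_image e.toLinearMap
  have hDspan : Submodule.span ℝ D = ⊤ := by
    rw [hD, ← LinearEquiv.coe_coe, Submodule.span_image, hspan, Submodule.map_top,
      LinearEquiv.range]
  have h0D : (0 : Fin n → ℝ) ∈ D := ⟨0, zero_mem_of_cone hcone hγ, map_zero e⟩
  have haff : affineSpan ℝ D = ⊤ := by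
    have hset : (affineSpan ℝ D : Set (Fin n → ℝ)) = (Submodule.span ℝ D : Set _) := by
      rw [← affineSpan_insert_zero, Set.insert_eq_of_mem h0D]
    rw [eq_top_iff]
    intro v _
    have hv : v ∈ (Submodule.span ℝ D : Set (Fin n → ℝ)) := by rw [hDspan]; trivial
    rw [← hset] at hv
    exact hv
  obtain ⟨p, hp⟩ := hDconv.interior_nonempty_iff_affineSpan_eq_top.2 haff
  -- get δ with p + δ • e x ∈ D
  obtain ⟨ε, hε, hball⟩ := Metric.mem_nhds_iff.1 (mem_interior_iff_mem_nhds.1 hp)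
  set x' := e x with hx'
  set δ : ℝ := ε / (2 * (‖x'‖ + 1)) with hδdef
  have hxpos : (0:ℝ) < ‖x'‖ + 1 := by positivity
  have hδ : 0 < δ := by positivity
  have hmem : p + δ • x' ∈ D := by
    apply hball
    rw [Metric.mem_ball]
    have : dist (p + δ • x') p = δ * ‖x'‖ := by
      rw [dist_eq_norm]
      simp [norm_smul, abs_of_pos hδ]
    rw [this, hδdef, div_mul_eq_mul_div, div_lt_iff₀ (by positivity)]
    nlinarith [norm_nonneg x']
  -- pull back
  obtain ⟨p0, hp0C, hp0⟩ := interior_subset hp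
  have hq0 : p0 + δ • x ∈ C := by
    obtain ⟨q0, hq0C, hq0⟩ := hmem
    have : q0 = p0 + δ • x := by
      apply e.injective
      rw [map_add, map_smul, hp0, hq0]
    rwa [← this]
  by_cases hp00 : p0 = 0
  · -- then δ • x ∈ C with u = 0, so x = 0
    subst hp00
    rw [zero_add] at hq0
    have hxz : x = 0 := by
      by_contra hne
      have : δ • x ≠ 0 := smul_ne_zero (ne_of_gt hδ) hne
      have := hu _ hq0 this
      rw [map_smul, hx] at this
      simp at this
    exact ⟨1, one_pos, by simp [hxz, hγ]⟩
  · have hup : 0 < u p0 := hu p0 hp0C hp00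
    set c : ℝ := (u p0)⁻¹ with hc
    have hcpos : 0 < c := inv_pos.2 hup
    have hq1 : c • p0 + (c * δ) • x ∈ C := by
      have := hcone _ hq0 c (le_of_lt hcpos)
      rwa [smul_add, smul_smul] at this
    have huq1 : u (c • p0 + (c * δ) • x) = 1 := by
      rw [map_add, map_smul, map_smul, hx, hc]
      simp [ne_of_gt hup]
    have hr1 : (2 : ℝ) • γ - c • p0 ∈ C := by
      apply hsym (c • p0) (hcone _ hp0C c (le_of_lt hcpos))
      rw [map_smul, hc]; simp [ne_of_gt hup]
    refine ⟨c * δ / 2, by positivity, ?_⟩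
    have := hconv hq1 hr1 (by norm_num : (0:ℝ) ≤ 1/2) (by norm_num : (0:ℝ) ≤ 1/2) (by norm_num)
    have heq : (1/2 : ℝ) • (c • p0 + (c * δ) • x) + (1/2 : ℝ) • ((2:ℝ) • γ - c • p0)
        = γ + (c * δ / 2) • x := by
      rw [smul_add, smul_sub, smul_smul, smul_smul, smul_smul]
      module
    rwa [heq] at this

end Aux

section Aux2

variable {V V1 V2 : Type*} [AddCommGroup V] [Module ℝ V]
  [AddCommGroup V1] [Module ℝ V1] [AddCommGroup V2] [Module ℝ V2]

lemma gaugeN_nonneg (C : Set V) (γ x : V) : 0 ≤ gaugeN C γ x :=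
  Real.sInf_nonneg (fun _ ht => le_of_lt ht.1)

lemma gaugeN_bddBelow (C : Set V) (γ x : V) :
    BddBelow {t : ℝ | 0 < t ∧ γ + t⁻¹ • x ∈ C} :=
  ⟨0, fun _ ht => le_of_lt ht.1⟩

lemma gaugeN_zero {C : Set V} {γ : V} (hγ : γ ∈ C) : gaugeN C γ (0 : V) = 0 := by
  unfold gaugeN
  have h : {t : ℝ | 0 < t ∧ γ + t⁻¹ • (0:V) ∈ C} = Set.Ioi 0 := by
    ext t; simp [hγ]
  rw [h, csInf_Ioi]

lemma gaugeN_neg {C : Set V} {u : Module.Dual ℝ V} {γ : V} (hγu : u γ = 1)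
    (hsym : ∀ ω ∈ C, u ω = 1 → (2 : ℝ) • γ - ω ∈ C) {x : V} (hx : u x = 0) :
    gaugeN C γ (-x) = gaugeN C γ x := by
  have key : ∀ y : V, u y = 0 →
      {t : ℝ | 0 < t ∧ γ + t⁻¹ • y ∈ C} ⊆ {t : ℝ | 0 < t ∧ γ + t⁻¹ • (-y) ∈ C} := by
    rintro y hy t ⟨ht, htm⟩
    refine ⟨ht, ?_⟩
    have h2 := hsym _ htm (by rw [map_add, map_smul, hγu, hy]; simp)
    have heq : (2:ℝ) • γ - (γ + t⁻¹ • y) = γ + t⁻¹ • (-y) := by module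
    rwa [heq] at h2
  have h1 := key x hx
  have h2 := key (-x) (by rw [map_neg, hx]; ring)
  rw [neg_neg] at h2
  unfold gaugeN
  congr 1
  exact subset_antisymm h2 h1

/-- Bound on the gauge of a weighted projected cone element. -/
lemma gaugeN_proj_le {C : Set V} (hcone : IsConeSet C) {u : Module.Dual ℝ V} {γ : V}
    (hγ : γ ∈ C) (hu : ∀ x ∈ C, x ≠ 0 → 0 < u x)
    {a : V} (ha : a ∈ C) {w : ℝ} (hw : 0 ≤ w) :
    gaugeN C γ (w • (a - u a • γ)) ≤ w * u a := by
  by_cases ha0 : a = 0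
  · subst ha0
    simp [gaugeN_zero hγ]
  rcases eq_or_lt_of_le hw with rfl | hw'
  · simp [gaugeN_zero hγ, le_of_lt (hu a ha ha0)]
  · have hua : 0 < u a := hu a ha ha0
    apply csInf_le (gaugeN_bddBelow C γ _)
    refine ⟨by positivity, ?_⟩
    have : γ + (w * u a)⁻¹ • (w • (a - u a • γ)) = (u a)⁻¹ • a := by
      rw [smul_smul]
      rw [show (w * u a)⁻¹ * w = (u a)⁻¹ by field_simp]
      rw [smul_sub, smul_smul, inv_mul_cancel₀ (ne_of_gt hua)]
      module
    rw [this]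
    exact hcone a ha _ (le_of_lt (inv_pos.2 hua))

/-- For a functional nonnegative on a symmetric cone, `|f v| ≤ f γ · N(v)` on the kernel. -/
lemma dual_bound {V : Type*} [AddCommGroup V] [Module ℝ V] [FiniteDimensional ℝ V]
    (C : Set V) (hC : IsProperCone C) (u : Module.Dual ℝ V) (γ : V)
    (hu : ∀ x ∈ C, x ≠ 0 → 0 < u x) (hγ : γ ∈ C) (hγu : u γ = 1)
    (hsym : ∀ ω ∈ C, u ω = 1 → (2 : ℝ) • γ - ω ∈ C)
    (f : Module.Dual ℝ V) (hf : f ∈ dualCone C)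
    (v : V) (hv : u v = 0) : |f v| ≤ f γ * gaugeN C γ v := by
  set S := {t : ℝ | 0 < t ∧ γ + t⁻¹ • v ∈ C} with hSdef
  have hS : S.Nonempty := by
    obtain ⟨t, ht, htm⟩ := exists_pos_smul_mem C hC u γ hu hγ hγu hsym v hv
    exact ⟨t⁻¹, inv_pos.2 ht, by rwa [inv_inv]⟩
  have hfγ : 0 ≤ f γ := hf γ hγ
  have hb : ∀ s ∈ S, |f v| ≤ f γ * s := by
    rintro s ⟨hs, hsm⟩
    have h1 : 0 ≤ f γ + s⁻¹ * f v := by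
      have := hf _ hsm; rwa [map_add, map_smul, smul_eq_mul] at this
    have hsm2 : γ + s⁻¹ • (-v) ∈ C := by
      have h2 := hsym _ hsm (by rw [map_add, map_smul, hγu, hv]; simp)
      have heq : (2:ℝ) • γ - (γ + s⁻¹ • v) = γ + s⁻¹ • (-v) := by module
      rwa [heq] at h2
    have h2 : 0 ≤ f γ - s⁻¹ * f v := by
      have := hf _ hsm2
      rw [map_add, map_smul, map_neg, smul_eq_mul] at this
      linarith
    rw [abs_le]
    constructor
    · have := mul_le_mul_of_nonneg_left h1 (le_of_lt hs)
      rw [mul_add, ← mul_assoc, mul_inv_cancel₀ (ne_of_gt hs)] at this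
      nlinarith
    · have := mul_le_mul_of_nonneg_left h2 (le_of_lt hs)
      rw [mul_sub, ← mul_assoc, mul_inv_cancel₀ (ne_of_gt hs)] at this
      nlinarith
  obtain ⟨s0, hs0⟩ := hS
  rcases eq_or_lt_of_le hfγ with h0 | h0
  · have h1 := hb s0 hs0
    rw [← h0] at h1 ⊢
    simpa using h1
  · have hlb : |f v| / f γ ≤ sInf S :=
      le_csInf ⟨s0, hs0⟩ (fun s hs => (div_le_iff₀ h0).2 (by linarith [hb s hs, mul_comm (f γ) s]))
    have := mul_le_mul_of_nonneg_left hlb (le_of_lt h0)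
    calc |f v| = f γ * (|f v| / f γ) := by field_simp
    _ ≤ f γ * sInf S := this

lemma projNormOn_le {X1 : Set V1} {X2 : Set V2} {N1 : V1 → ℝ} {N2 : V2 → ℝ}
    (hN1 : ∀ x, 0 ≤ N1 x) (hN2 : ∀ y, 0 ≤ N2 y)
    {z : V1 ⊗[ℝ] V2} {k : ℕ} {x : Fin k → V1} {y : Fin k → V2}
    (hx : ∀ i, x i ∈ X1) (hy : ∀ i, y i ∈ X2) (hz : z = ∑ i, x i ⊗ₜ[ℝ] y i) :
    projNormOn X1 X2 N1 N2 z ≤ ∑ i, N1 (x i) * N2 (y i) := by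
  apply csInf_le
  · refine ⟨0, ?_⟩
    rintro s ⟨k', x', y', _, _, _, rfl⟩
    exact Finset.sum_nonneg fun i _ => mul_nonneg (hN1 _) (hN2 _)
  · exact ⟨k, x, y, hx, hy, hz, rfl⟩

/-- The projection onto the kernel of `u` along `γ`. -/
noncomputable def projL (u : Module.Dual ℝ V) (γ : V) : V →ₗ[ℝ] V :=
  LinearMap.id - u.smulRight γ

@[simp] lemma projL_apply (u : Module.Dual ℝ V) (γ : V) (x : V) :
    projL u γ x = x - u x • γ := rfl

end Aux2

section Aux3

variable {V1 V2 : Type*} [AddCommGroup V1] [Module ℝ V1] [AddCommGroup V2] [Module ℝ V2]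

/-- Decomposition of a separable state under the projections, with control of gauges. -/
lemma minTensor_decomp {C1 : Set V1} {C2 : Set V2}
    (hcone1 : IsConeSet C1) (hcone2 : IsConeSet C2)
    (u1 : Module.Dual ℝ V1) (u2 : Module.Dual ℝ V2) (γ1 : V1) (γ2 : V2)
    (hγ1 : γ1 ∈ C1) (hγ2 : γ2 ∈ C2) (hγ1u : u1 γ1 = 1) (hγ2u : u2 γ2 = 1)
    (hu1 : ∀ x ∈ C1, x ≠ 0 → 0 < u1 x) (hu2 : ∀ x ∈ C2, x ≠ 0 → 0 < u2 x)
    {ω : V1 ⊗[ℝ] V2} (hω : ω ∈ minTensor C1 C2) :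
    ∃ (k : ℕ) (x : Fin k → V1) (y : Fin k → V2),
      (∀ i, u1 (x i) = 0) ∧ (∀ i, u2 (y i) = 0) ∧
      TensorProduct.map (projL u1 γ1) (projL u2 γ2) ω = ∑ i, x i ⊗ₜ[ℝ] y i ∧
      ∑ i, gaugeN C1 γ1 (x i) * gaugeN C2 γ2 (y i) ≤ pairTensor u1 u2 ω := by
  rw [minTensor, convexHull_eq] at hω
  obtain ⟨ι, t, w, zf, hw0, hw1, hzs, hcm⟩ := hω
  rw [Finset.centerMass_eq_of_sum_1 _ _ hw1] at hcm
  have hchoice : ∀ i : {i // i ∈ t}, ∃ (a : V1) (b : V2),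
      a ∈ C1 ∧ b ∈ C2 ∧ zf i = a ⊗ₜ[ℝ] b := by
    rintro ⟨i, hi⟩
    obtain ⟨aa, ha, bb, hb, hab⟩ := hzs i hi
    exact ⟨aa, bb, ha, hb, hab⟩
  choose a b ha hb hab using hchoice
  set k := t.card with hk
  set ee := (t.equivFin).symm with hee
  have homega : ω = ∑ j : Fin k, w (ee j) • ((a (ee j)) ⊗ₜ[ℝ] (b (ee j))) := by
    rw [← hcm, ← Finset.sum_coe_sort t, ← Equiv.sum_comp ee]
    exact Finset.sum_congr rfl fun j _ => by rw [hab (ee j)]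
  refine ⟨k, fun j => w (ee j) • (a (ee j) - u1 (a (ee j)) • γ1),
    fun j => b (ee j) - u2 (b (ee j)) • γ2, ?_, ?_, ?_, ?_⟩
  · intro j; simp [map_smul, map_sub, smul_eq_mul, hγ1u]
  · intro j; simp [map_sub, hγ2u]
  · rw [homega, map_sum]
    apply Finset.sum_congr rfl
    intro j _
    rw [map_smul, TensorProduct.map_tmul, projL_apply, projL_apply,
      ← TensorProduct.smul_tmul']
  · have hpt : pairTensor u1 u2 ω
        = ∑ j : Fin k, w (ee j) * (u1 (a (ee j)) * u2 (b (ee j))) := by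
      rw [homega, map_sum]
      apply Finset.sum_congr rfl
      intro j _
      rw [map_smul, pairTensor_tmul, smul_eq_mul]
    rw [hpt]
    apply Finset.sum_le_sum
    intro j _
    have hwj : 0 ≤ w (ee j) := hw0 _ (ee j).2
    have h1 : gaugeN C1 γ1 (w (ee j) • (a (ee j) - u1 (a (ee j)) • γ1))
        ≤ w (ee j) * u1 (a (ee j)) := gaugeN_proj_le hcone1 hγ1 hu1 (ha _) hwj
    have h2 : gaugeN C2 γ2 (b (ee j) - u2 (b (ee j)) • γ2) ≤ u2 (b (ee j)) := by
      have := gaugeN_proj_le hcone2 hγ2 hu2 (hb (ee j)) (zero_le_one)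
      rwa [one_smul, one_mul] at this
    calc gaugeN C1 γ1 _ * gaugeN C2 γ2 _
        ≤ (w (ee j) * u1 (a (ee j))) * u2 (b (ee j)) :=
          mul_le_mul h1 h2 (gaugeN_nonneg _ _ _) (le_trans (gaugeN_nonneg _ _ _) h1)
    _ = w (ee j) * (u1 (a (ee j)) * u2 (b (ee j))) := by ring

end Aux3

/-- Lower bound on entanglement robustness for symmetric GPTs: if `z ∈ X1 ⊗ X2` has
injective norm at most 1, then `ω(z) = γ1 ⊗ γ2 + z` belongs to the maximal tensor
product, and `E_rob(ω(z)) ≥ (‖z‖_π − 1)/2`. -/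
theorem stmt19 {V1 V2 : Type*}
    [AddCommGroup V1] [Module ℝ V1] [FiniteDimensional ℝ V1]
    [AddCommGroup V2] [Module ℝ V2] [FiniteDimensional ℝ V2]
    (C1 : Set V1) (C2 : Set V2) (u1 : Module.Dual ℝ V1) (u2 : Module.Dual ℝ V2)
    (γ1 : V1) (γ2 : V2)
    (hC1 : IsProperCone C1) (hC2 : IsProperCone C2)
    (hu1 : ∀ x ∈ C1, x ≠ 0 → 0 < u1 x) (hu2 : ∀ x ∈ C2, x ≠ 0 → 0 < u2 x)
    (hγ1C : γ1 ∈ C1) (hγ1u : u1 γ1 = 1) (hγ2C : γ2 ∈ C2) (hγ2u : u2 γ2 = 1)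
    (hsym1 : ∀ ω ∈ C1, u1 ω = 1 → (2 : ℝ) • γ1 - ω ∈ C1)
    (hsym2 : ∀ ω ∈ C2, u2 ω = 1 → (2 : ℝ) • γ2 - ω ∈ C2)
    (z : V1 ⊗[ℝ] V2)
    (hz : ∃ (k : ℕ) (x : Fin k → V1) (y : Fin k → V2),
      (∀ i, u1 (x i) = 0) ∧ (∀ i, u2 (y i) = 0) ∧ z = ∑ i, x i ⊗ₜ[ℝ] y i)
    (hinj : injNormOn {x | u1 x = 0} {y | u2 y = 0}
      (gaugeN C1 γ1) (gaugeN C2 γ2) z ≤ 1) :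
    γ1 ⊗ₜ[ℝ] γ2 + z ∈ maxTensor C1 C2 ∧
    (projNormOn {x | u1 x = 0} {y | u2 y = 0} (gaugeN C1 γ1) (gaugeN C2 γ2) z - 1) / 2
      ≤ entRob C1 C2 u1 u2 (γ1 ⊗ₜ[ℝ] γ2 + z) := by
  obtain ⟨k, x, y, hux, huy, hzdec⟩ := hz
  have hcone1 : IsConeSet C1 := hC1.2.2.1
  have hcone2 : IsConeSet C2 := hC2.2.2.1
  have hpz : pairTensor u1 u2 z = 0 := by
    rw [hzdec, map_sum]
    simp [pairTensor_tmul, hux, huy]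
  have hpω : pairTensor u1 u2 (γ1 ⊗ₜ[ℝ] γ2 + z) = 1 := by
    rw [map_add, pairTensor_tmul, hγ1u, hγ2u, hpz]; ring
  constructor
  · -- maxTensor membership
    intro f hf g hg
    have hfb : ∀ v, u1 v = 0 → |f v| ≤ f γ1 * gaugeN C1 γ1 v := fun v hv =>
      dual_bound C1 hC1 u1 γ1 hu1 hγ1C hγ1u hsym1 f hf v hv
    have hgb : ∀ v, u2 v = 0 → |g v| ≤ g γ2 * gaugeN C2 γ2 v := fun v hv =>
      dual_bound C2 hC2 u2 γ2 hu2 hγ2C hγ2u hsym2 g hg v hv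
    have hfγ : 0 ≤ f γ1 := hf γ1 hγ1C
    have hgγ : 0 ≤ g γ2 := hg γ2 hγ2C
    have hcomp : pairTensor f g (γ1 ⊗ₜ[ℝ] γ2 + z)
        = f γ1 * g γ2 + ∑ i, f (x i) * g (y i) := by
      rw [map_add, pairTensor_tmul, hzdec, map_sum]
      simp [pairTensor_tmul]
    rw [hcomp]
    rcases eq_or_lt_of_le hfγ with h0 | h0
    · have hfz : ∀ i, f (x i) = 0 := by
        intro i
        have h := hfb (x i) (hux i)
        rw [← h0, zero_mul] at h
        exact abs_nonpos_iff.1 h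
      simp [hfz, ← h0]
    rcases eq_or_lt_of_le hgγ with h0' | h0'
    · have hgz : ∀ i, g (y i) = 0 := by
        intro i
        have h := hgb (y i) (huy i)
        rw [← h0', zero_mul] at h
        exact abs_nonpos_iff.1 h
      simp [hgz, ← h0']
    · -- main case: use injective norm bound
      have hN1neg : ∀ v, u1 v = 0 → gaugeN C1 γ1 (-v) = gaugeN C1 γ1 v :=
        fun v hv => gaugeN_neg hγ1u hsym1 hv
      have hRbdd : BddAbove {r : ℝ | ∃ (f' : Module.Dual ℝ V1) (g' : Module.Dual ℝ V2),
          (∀ v ∈ {x | u1 x = 0}, f' v ≤ gaugeN C1 γ1 v) ∧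
          (∀ v ∈ {y | u2 y = 0}, g' v ≤ gaugeN C2 γ2 v) ∧ r = pairTensor f' g' z} := by
        refine ⟨∑ i, gaugeN C1 γ1 (x i) * gaugeN C2 γ2 (y i), ?_⟩
        rintro r ⟨f', g', hf', hg', rfl⟩
        have hval : pairTensor f' g' z = ∑ i, f' (x i) * g' (y i) := by
          rw [hzdec, map_sum]; simp [pairTensor_tmul]
        rw [hval]
        apply Finset.sum_le_sum
        intro i _
        have h1 : |f' (x i)| ≤ gaugeN C1 γ1 (x i) := by
          rw [abs_le]
          refine ⟨?_, hf' _ (hux i)⟩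
          have := hf' (-(x i)) (by simp [hux i])
          rw [map_neg, hN1neg _ (hux i)] at this
          linarith
        have h2 : |g' (y i)| ≤ gaugeN C2 γ2 (y i) := by
          rw [abs_le]
          refine ⟨?_, hg' _ (huy i)⟩
          have := hg' (-(y i)) (by simp [huy i])
          rw [map_neg, gaugeN_neg hγ2u hsym2 (huy i)] at this
          linarith
        calc f' (x i) * g' (y i) ≤ |f' (x i) * g' (y i)| := le_abs_self _
        _ = |f' (x i)| * |g' (y i)| := abs_mul _ _
        _ ≤ gaugeN C1 γ1 (x i) * gaugeN C2 γ2 (y i) :=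
          mul_le_mul h1 h2 (abs_nonneg _) (le_trans (abs_nonneg _) h1)
      set f' : Module.Dual ℝ V1 := (-(f γ1)⁻¹) • f with hf'def
      set g' : Module.Dual ℝ V2 := (g γ2)⁻¹ • g with hg'def
      have hf'adm : ∀ v ∈ {x | u1 x = 0}, f' v ≤ gaugeN C1 γ1 v := by
        intro v hv
        have h := hfb v hv
        have h1 : f' v ≤ (f γ1)⁻¹ * |f v| := by
          rw [hf'def]
          simp only [LinearMap.smul_apply, smul_eq_mul, neg_mul]
          have habs := neg_le_abs ((f γ1)⁻¹ * f v)
          rw [abs_mul, abs_of_pos (inv_pos.2 h0)] at habs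
          linarith
        have h2 : (f γ1)⁻¹ * |f v| ≤ (f γ1)⁻¹ * (f γ1 * gaugeN C1 γ1 v) :=
          mul_le_mul_of_nonneg_left h (le_of_lt (inv_pos.2 h0))
        have h3 : (f γ1)⁻¹ * (f γ1 * gaugeN C1 γ1 v) = gaugeN C1 γ1 v := by
          field_simp
        linarith
      have hg'adm : ∀ v ∈ {y | u2 y = 0}, g' v ≤ gaugeN C2 γ2 v := by
        intro v hv
        have h := hgb v hv
        have h1 : g' v ≤ (g γ2)⁻¹ * |g v| := by
          rw [hg'def]
          simp only [LinearMap.smul_apply, smul_eq_mul]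
          have habs := le_abs_self ((g γ2)⁻¹ * g v)
          rw [abs_mul, abs_of_pos (inv_pos.2 h0')] at habs
          linarith
        have h2 : (g γ2)⁻¹ * |g v| ≤ (g γ2)⁻¹ * (g γ2 * gaugeN C2 γ2 v) :=
          mul_le_mul_of_nonneg_left h (le_of_lt (inv_pos.2 h0'))
        have h3 : (g γ2)⁻¹ * (g γ2 * gaugeN C2 γ2 v) = gaugeN C2 γ2 v := by
          field_simp
        linarith
      have hmem : pairTensor f' g' z ∈ {r : ℝ | ∃ (f' : Module.Dual ℝ V1) (g' : Module.Dual ℝ V2),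
          (∀ v ∈ {x | u1 x = 0}, f' v ≤ gaugeN C1 γ1 v) ∧
          (∀ v ∈ {y | u2 y = 0}, g' v ≤ gaugeN C2 γ2 v) ∧ r = pairTensor f' g' z} :=
        ⟨f', g', hf'adm, hg'adm, rfl⟩
      have hle1 : pairTensor f' g' z ≤ 1 := le_trans (le_csSup hRbdd hmem) hinj
      have hval : pairTensor f' g' z
          = (-(f γ1)⁻¹ * (g γ2)⁻¹) * ∑ i, f (x i) * g (y i) := by
        rw [hzdec, map_sum, Finset.mul_sum]
        apply Finset.sum_congr rfl
        intro i _
        rw [pairTensor_tmul, hf'def, hg'def]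
        simp only [LinearMap.smul_apply, smul_eq_mul]
        ring
      rw [hval] at hle1
      set S := ∑ i, f (x i) * g (y i) with hSdef
      have hkey : f γ1 * g γ2 * ((-(f γ1)⁻¹ * (g γ2)⁻¹) * S) = -S := by
        field_simp
      nlinarith [mul_le_mul_of_nonneg_left hle1 (le_of_lt (mul_pos h0 h0'))]
  · -- entanglement robustness lower bound
    have hPz : TensorProduct.map (projL u1 γ1) (projL u2 γ2) (γ1 ⊗ₜ[ℝ] γ2 + z) = z := by
      rw [map_add, hzdec, map_sum]
      simp [TensorProduct.map_tmul, hγ1u, hγ2u, hux, huy]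
    apply le_csInf
    · -- feasible set nonempty
      have hex1 : ∀ i, ∃ t : ℝ, 0 < t ∧ γ1 + t • x i ∈ C1 := fun i =>
        exists_pos_smul_mem C1 hC1 u1 γ1 hu1 hγ1C hγ1u hsym1 (x i) (hux i)
      have hex2 : ∀ i, ∃ t : ℝ, 0 < t ∧ γ2 + t • y i ∈ C2 := fun i =>
        exists_pos_smul_mem C2 hC2 u2 γ2 hu2 hγ2C hγ2u hsym2 (y i) (huy i)
      choose tt htt htm using hex1
      choose ss hss hsm using hex2
      have htm' : ∀ i, γ1 - tt i • x i ∈ C1 := by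
        intro i
        have h := hsym1 _ (htm i) (by rw [map_add, map_smul, hγ1u, hux i]; simp)
        have heq : (2:ℝ) • γ1 - (γ1 + tt i • x i) = γ1 - tt i • x i := by module
        rwa [heq] at h
      have hsm' : ∀ i, γ2 - ss i • y i ∈ C2 := by
        intro i
        have h := hsym2 _ (hsm i) (by rw [map_add, map_smul, hγ2u, huy i]; simp)
        have heq : (2:ℝ) • γ2 - (γ2 + ss i • y i) = γ2 - ss i • y i := by module
        rwa [heq] at h
      set ζ : V1 ⊗[ℝ] V2 := ∑ i, ((4 * tt i * ss i)⁻¹) •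
        ((γ1 + tt i • x i) ⊗ₜ[ℝ] (γ2 - ss i • y i)
          + (γ1 - tt i • x i) ⊗ₜ[ℝ] (γ2 + ss i • y i)) with hζdef
      have hζmem : ζ ∈ minTensor C1 C2 := by
        rw [hζdef]
        apply Finset.sum_induction _ (· ∈ minTensor C1 C2)
          (fun a b => minTensor_add_mem hcone1)
          (minTensor_zero_mem hcone1 hγ1C hγ2C)
        intro i _
        apply minTensor_smul_mem hcone1
          (le_of_lt (inv_pos.2 (mul_pos (mul_pos four_pos (htt i)) (hss i))))
        exact minTensor_add_mem hcone1 (minTensor_tmul_mem (htm i) (hsm' i))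
          (minTensor_tmul_mem (htm' i) (hsm i))
      have hωζ : γ1 ⊗ₜ[ℝ] γ2 + z + ζ ∈ minTensor C1 C2 := by
        have hkey : γ1 ⊗ₜ[ℝ] γ2 + z + ζ = γ1 ⊗ₜ[ℝ] γ2 + ∑ i, ((4 * tt i * ss i)⁻¹) •
            ((γ1 + tt i • x i) ⊗ₜ[ℝ] (γ2 + ss i • y i)
              + (γ1 - tt i • x i) ⊗ₜ[ℝ] (γ2 - ss i • y i)) := by
          rw [hζdef, hzdec, add_assoc, ← Finset.sum_add_distrib]
          congr 1
          apply Finset.sum_congr rfl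
          intro i _
          have hts : (4 * tt i * ss i) ≠ 0 :=
            ne_of_gt (mul_pos (mul_pos four_pos (htt i)) (hss i))
          have hexp : ((γ1 + tt i • x i) ⊗ₜ[ℝ] (γ2 + ss i • y i)
                + (γ1 - tt i • x i) ⊗ₜ[ℝ] (γ2 - ss i • y i))
              - ((γ1 + tt i • x i) ⊗ₜ[ℝ] (γ2 - ss i • y i)
                + (γ1 - tt i • x i) ⊗ₜ[ℝ] (γ2 + ss i • y i))
              = (4 * tt i * ss i) • (x i ⊗ₜ[ℝ] y i) := by
            simp only [TensorProduct.tmul_add, TensorProduct.add_tmul,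
              TensorProduct.tmul_sub, TensorProduct.sub_tmul,
              TensorProduct.tmul_smul, ← TensorProduct.smul_tmul', smul_smul]
            module
          have := congrArg (fun w => ((4 * tt i * ss i)⁻¹ : ℝ) • w) hexp
          simp only [smul_sub, smul_smul, inv_mul_cancel₀ hts, one_smul] at this
          rw [← this]
          abel
        rw [hkey]
        apply minTensor_add_mem hcone1 (minTensor_tmul_mem hγ1C hγ2C)
        apply Finset.sum_induction _ (· ∈ minTensor C1 C2)
          (fun a b => minTensor_add_mem hcone1)
          (minTensor_zero_mem hcone1 hγ1C hγ2C)
        intro i _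
        apply minTensor_smul_mem hcone1
          (le_of_lt (inv_pos.2 (mul_pos (mul_pos four_pos (htt i)) (hss i))))
        exact minTensor_add_mem hcone1 (minTensor_tmul_mem (htm i) (hsm i))
          (minTensor_tmul_mem (htm' i) (hsm' i))
      exact ⟨pairTensor u1 u2 ζ, ζ, hζmem, hωζ, rfl⟩
    · -- every feasible value is at least the bound
      rintro r ⟨ζ, hζ, hωζ, rfl⟩
      obtain ⟨k1, X1, Y1, hX1, hY1, hmap1, hsum1⟩ :=
        minTensor_decomp hcone1 hcone2 u1 u2 γ1 γ2 hγ1C hγ2C hγ1u hγ2u hu1 hu2 hωζ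
      obtain ⟨k2, X2, Y2, hX2, hY2, hmap2, hsum2⟩ :=
        minTensor_decomp hcone1 hcone2 u1 u2 γ1 γ2 hγ1C hγ2C hγ1u hγ2u hu1 hu2 hζ
      have hzsplit : z = (∑ i, X1 i ⊗ₜ[ℝ] Y1 i) + ∑ j, (-(X2 j)) ⊗ₜ[ℝ] Y2 j := by
        have h1 : TensorProduct.map (projL u1 γ1) (projL u2 γ2) (γ1 ⊗ₜ[ℝ] γ2 + z + ζ)
            = TensorProduct.map (projL u1 γ1) (projL u2 γ2) (γ1 ⊗ₜ[ℝ] γ2 + z)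
              + TensorProduct.map (projL u1 γ1) (projL u2 γ2) ζ := map_add _ _ _
        rw [hmap1, hmap2, hPz] at h1
        have : z = (∑ i, X1 i ⊗ₜ[ℝ] Y1 i) - ∑ j, X2 j ⊗ₜ[ℝ] Y2 j := by
          rw [h1]; abel
        rw [this, sub_eq_add_neg, ← Finset.sum_neg_distrib]
        simp [TensorProduct.neg_tmul]
      set XX : Fin (k1 + k2) → V1 := Fin.addCases X1 (fun j => -(X2 j)) with hXX
      set YY : Fin (k1 + k2) → V2 := Fin.addCases Y1 Y2 with hYY
      have hXXm : ∀ i, u1 (XX i) = 0 := by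
        intro i
        refine Fin.addCases ?_ ?_ i
        · intro i0; simp [hXX, hX1 i0]
        · intro j0; simp [hXX, hX2 j0]
      have hYYm : ∀ i, u2 (YY i) = 0 := by
        intro i
        refine Fin.addCases ?_ ?_ i
        · intro i0; simp [hYY, hY1 i0]
        · intro j0; simp [hYY, hY2 j0]
      have hzz : z = ∑ i : Fin (k1 + k2), XX i ⊗ₜ[ℝ] YY i := by
        rw [Fin.sum_univ_add]
        simp only [hXX, hYY, Fin.addCases_left, Fin.addCases_right]
        exact hzsplit
      have hP := projNormOn_le (X1 := {x | u1 x = 0}) (X2 := {y | u2 y = 0})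
        (gaugeN_nonneg C1 γ1) (gaugeN_nonneg C2 γ2) hXXm hYYm hzz
      have hsplit : ∑ i : Fin (k1 + k2), gaugeN C1 γ1 (XX i) * gaugeN C2 γ2 (YY i)
          = (∑ i, gaugeN C1 γ1 (X1 i) * gaugeN C2 γ2 (Y1 i))
            + ∑ j, gaugeN C1 γ1 (X2 j) * gaugeN C2 γ2 (Y2 j) := by
        rw [Fin.sum_univ_add]
        congr 1
        · apply Finset.sum_congr rfl; intro i _
          simp [hXX, hYY]
        · apply Finset.sum_congr rfl; intro j _
          simp only [hXX, hYY, Fin.addCases_right]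
          rw [gaugeN_neg hγ1u hsym1 (hX2 j)]
      rw [hsplit] at hP
      have hpωζ : pairTensor u1 u2 (γ1 ⊗ₜ[ℝ] γ2 + z + ζ) = 1 + pairTensor u1 u2 ζ := by
        rw [map_add, hpω]
      rw [hpωζ] at hsum1
      have hr0 : 0 ≤ pairTensor u1 u2 ζ := by
        refine le_trans ?_ hsum2
        exact Finset.sum_nonneg fun i _ =>
          mul_nonneg (gaugeN_nonneg _ _ _) (gaugeN_nonneg _ _ _)
      linarith
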